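/- Let G be a finite π-separable group in which every irreducible character is a constituent of (1_M)^G for some maximal subgroup M of π-power index, and let N be a minimal normal subgroup. Then N is a π-group. -/

import Mathlib

open scoped BigOperators Classical

/-- The character of a finite group induced from a function on a subgroup,
given by the usual induction formula. -/
noncomputable def indChar {G : Type} [Group G] (H : Subgroup G) (φ : H → ℂ) : G → ℂ :=
  fun g => (Nat.card H : ℂ)⁻¹ *
    ∑ᶠ x : G, if h : x * g * x⁻¹ ∈ H then φ (⟨x * g * x⁻¹, h⟩ : H) else 0

/-- The permutation character `(1_M)^G`. -/
noncomputable def permChar {G : Type} [Group G] (M : Subgroup G) : G → ℂ :=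
  indChar M (fun _ => 1)

/-- The usual inner product of class functions on a finite group. -/
noncomputable def charInner (G : Type) [Group G] (φ ψ : G → ℂ) : ℂ :=
  (Nat.card G : ℂ)⁻¹ * ∑ᶠ g : G, φ g * (starRingEnd ℂ) (ψ g)

/-- `χ` is an irreducible complex character of `G`. -/
def IsIrrChar (G : Type) [Group G] (χ : G → ℂ) : Prop :=
  ∃ V : FDRep ℂ G, CategoryTheory.Simple V ∧ FDRep.character V = χ

/-- `χ` is an irreducible constituent of the (virtual) character `ψ`. -/
def IsConstituent (G : Type) [Group G] (χ ψ : G → ℂ) : Prop :=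
  IsIrrChar G χ ∧ charInner G χ ψ ≠ 0

/-- A linear character of a subgroup: a multiplicative function to `ℂ` taking value `1` at `1`. -/
def IsLinearChar {G : Type} [Group G] (H : Subgroup G) (φ : H → ℂ) : Prop :=
  φ 1 = 1 ∧ ∀ a b : H, φ (a * b) = φ a * φ b

/-- A character is monomial if it is induced from a linear character of a subgroup. -/
def IsMonomial (G : Type) [Group G] (χ : G → ℂ) : Prop :=
  ∃ (H : Subgroup G) (φ : H → ℂ), IsLinearChar H φ ∧ χ = indChar H φ

/-- The kernel of a character, as a set. -/
def charKer (G : Type) [Group G] (χ : G → ℂ) : Set G := {g | χ g = χ 1}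

/-- `n` is a `π`-number: all its prime divisors lie in `π`. -/
def IsPiNumber (π : Set ℕ) (n : ℕ) : Prop := ∀ p : ℕ, p.Prime → p ∣ n → p ∈ π

/-- The largest normal `π'`-subgroup `O_{π'}(G)` (as the join of all normal `π'`-subgroups). -/
def Opi' (π : Set ℕ) (G : Type) [Group G] : Subgroup G :=
  ⨆ N ∈ {N : Subgroup G | N.Normal ∧ IsPiNumber πᶜ (Nat.card N)}, N

/-- `G` is `π`-separable: it has a normal series whose factors are `π`-groups or `π'`-groups. -/
def IsPiSeparable (π : Set ℕ) (G : Type) [Group G] : Prop :=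
  ∃ (n : ℕ) (H : Fin (n + 1) → Subgroup G),
    H 0 = ⊥ ∧ H (Fin.last n) = ⊤ ∧
    ∀ i : Fin n, H i.castSucc ≤ H i.succ ∧
      ((H i.castSucc).subgroupOf (H i.succ)).Normal ∧
      (IsPiNumber π (Nat.card (H i.succ ⧸ (H i.castSucc).subgroupOf (H i.succ))) ∨
       IsPiNumber πᶜ (Nat.card (H i.succ ⧸ (H i.castSucc).subgroupOf (H i.succ))))

/-- `G` is `π`-solvable: it has a normal series whose factors are `π'`-groups or solvable. -/
def IsPiSolvable (π : Set ℕ) (G : Type) [Group G] : Prop :=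
  ∃ (n : ℕ) (H : Fin (n + 1) → Subgroup G),
    H 0 = ⊥ ∧ H (Fin.last n) = ⊤ ∧
    ∀ i : Fin n, H i.castSucc ≤ H i.succ ∧
      ∃ hn : ((H i.castSucc).subgroupOf (H i.succ)).Normal,
      (IsPiNumber πᶜ (Nat.card (H i.succ ⧸ (H i.castSucc).subgroupOf (H i.succ))) ∨
       (letI := hn; IsSolvable (H i.succ ⧸ (H i.castSucc).subgroupOf (H i.succ))))

/-- The inertia subgroup `I_G(λ)` of a character of a normal subgroup. -/
def inertia {G : Type} [Group G] (N : Subgroup G) (hN : N.Normal) (lam : N → ℂ) :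
    Subgroup G where
  carrier := {g | ∀ n : N, lam ⟨g * n * g⁻¹, hN.conj_mem n n.2 g⟩ = lam n}
  one_mem' := by intro n; simp
  mul_mem' := by
    intro a b ha hb n
    have h1 := ha ⟨b * (n : G) * b⁻¹, hN.conj_mem n n.2 b⟩
    have h2 := hb n
    have e : (a * b) * (n : G) * (a * b)⁻¹ = a * (b * (n : G) * b⁻¹) * a⁻¹ := by group
    calc lam ⟨(a * b) * (n : G) * (a * b)⁻¹, hN.conj_mem n n.2 (a * b)⟩
        = lam ⟨a * (b * (n : G) * b⁻¹) * a⁻¹, by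
            rw [← e]; exact hN.conj_mem n n.2 (a * b)⟩ := by
          congr 1; exact Subtype.ext e
      _ = lam n := by rw [h1]; exact h2
  inv_mem' := by
    intro a ha n
    have h1 := ha ⟨a⁻¹ * (n : G) * a, by simpa using hN.conj_mem n n.2 a⁻¹⟩
    have e : a * (a⁻¹ * (n : G) * a) * a⁻¹ = (n : G) := by group
    have : lam ⟨(n : G), by rw [← e]; exact hN.conj_mem _ (by simpa using hN.conj_mem n n.2 a⁻¹) a⟩
        = lam ⟨a⁻¹ * (n : G) * a, by simpa using hN.conj_mem n n.2 a⁻¹⟩ := by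
      rw [← h1]; congr 1; exact Subtype.ext e.symm
    simpa using this.symm

/-- Conjugate of a character of a normal subgroup by a group element. -/
def conjChar {G : Type} [Group G] {N : Subgroup G} (hN : N.Normal) (g : G) (lam : N → ℂ) :
    N → ℂ :=
  fun n => lam ⟨g * (n : G) * g⁻¹, hN.conj_mem n n.2 g⟩

section AuxiliaryLemmas

open CategoryTheory
open scoped Pointwise

namespace Aux

theorem pi_of_dvd {π : Set ℕ} {m n : ℕ} (h : IsPiNumber π n) (hd : m ∣ n) : IsPiNumber π m :=
  fun p pp pd => h p pp (pd.trans hd)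

theorem pi_mul {π : Set ℕ} {a b : ℕ} (ha : IsPiNumber π a) (hb : IsPiNumber π b) :
    IsPiNumber π (a * b) := fun p pp pd => ((Nat.Prime.dvd_mul pp).mp pd).elim (ha p pp) (hb p pp)

theorem pi_one {π : Set ℕ} : IsPiNumber π 1 := fun p pp pd => absurd (Nat.le_of_dvd one_pos pd) (Nat.not_le.mpr pp.one_lt)

variable {G : Type} [Group G]

/-- `K` is normalized by (and contained in) `X`. -/
def NormalIn (X K : Subgroup G) : Prop :=
  K ≤ X ∧ ∀ x ∈ X, ∀ a ∈ K, x * a * x⁻¹ ∈ K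

theorem NormalIn.refl (K : Subgroup G) : NormalIn K K :=
  ⟨le_rfl, fun x hx a ha => K.mul_mem (K.mul_mem hx ha) (K.inv_mem hx)⟩

/-- The "σ-core" of a subgroup `X`: join of all σ-subgroups normalized by `X`. -/
noncomputable def piCore (σ : Set ℕ) (X : Subgroup G) : Subgroup G :=
  sSup {K | NormalIn X K ∧ IsPiNumber σ (Nat.card K)}

theorem le_piCore {σ : Set ℕ} {X K : Subgroup G} (h1 : NormalIn X K)
    (h2 : IsPiNumber σ (Nat.card K)) : K ≤ piCore σ X :=
  le_sSup ⟨h1, h2⟩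

theorem piCore_le {σ : Set ℕ} {X : Subgroup G} : piCore σ X ≤ X :=
  sSup_le fun _ hK => hK.1.1

/-- Key cardinality lemma: if `A` and `B` are normalized by `X` and contained in `X`,
then `card (A ⊔ B)` divides `card A * card B`. -/
theorem card_sup_dvd {X A B : Subgroup G} [Finite G] (hA : NormalIn X A) (hB : NormalIn X B) :
    Nat.card (A ⊔ B : Subgroup G) ∣ Nat.card A * Nat.card B := by
  set Hs := A ⊔ B with hHs
  have hAH : A ≤ Hs := le_sup_left
  have hBH : B ≤ Hs := le_sup_right
  -- A is normalized by Hs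
  have hnorm : (A.subgroupOf Hs).Normal := by
    rw [Subgroup.normal_subgroupOf_iff hAH]
    intro h g hh hg
    have hg' : g ∈ X := by
      revert hg
      rw [hHs]
      refine fun hg => (sup_le hA.1 hB.1 : A ⊔ B ≤ X) hg
    exact hA.2 g hg' h hh
  -- card Hs = card A * index
  have hcard : Nat.card (A.subgroupOf Hs) * (A.subgroupOf Hs).index = Nat.card Hs :=
    Subgroup.card_mul_index _
  have hcardA : Nat.card (A.subgroupOf Hs) = Nat.card A :=
    Nat.card_congr (Subgroup.subgroupOfEquivOfLe hAH).toEquiv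
  -- the quotient is covered by B
  have hsup : A.subgroupOf Hs ⊔ B.subgroupOf Hs = ⊤ := by
    rw [← Subgroup.subgroupOf_sup hAH hBH, hHs, Subgroup.subgroupOf_self]
  have hsurj : Function.Surjective
      ((QuotientGroup.mk' (A.subgroupOf Hs)).comp (Subgroup.inclusion hBH)) := by
    intro q
    obtain ⟨y, rfl⟩ := QuotientGroup.mk'_surjective (A.subgroupOf Hs) q
    have hy : y ∈ A.subgroupOf Hs ⊔ B.subgroupOf Hs := hsup ▸ Subgroup.mem_top y
    rw [sup_comm] at hy
    have hy2 : y ∈ ((B.subgroupOf Hs : Set ↥Hs) * (A.subgroupOf Hs : Set ↥Hs)) := by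
      rw [← Subgroup.mul_normal]
      simpa using hy
    obtain ⟨b, hb, a, ha, hab⟩ := hy2
    refine ⟨⟨(b : Hs), hb⟩, ?_⟩
    simp only [MonoidHom.comp_apply, QuotientGroup.mk'_apply]
    rw [QuotientGroup.eq]
    have hincl : (Subgroup.inclusion hBH ⟨(b : Hs), hb⟩ : Hs) = b := rfl
    have : (Subgroup.inclusion hBH ⟨(b : Hs), hb⟩)⁻¹ * y = a := by
      rw [← hab]
      ext
      simp [hincl]
    rw [this]
    exact ha
  have hdvd : (A.subgroupOf Hs).index ∣ Nat.card B :=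
    Subgroup.card_dvd_of_surjective _ hsurj
  calc Nat.card Hs = Nat.card A * (A.subgroupOf Hs).index := by rw [← hcard, hcardA]
    _ ∣ Nat.card A * Nat.card B := mul_dvd_mul_left _ hdvd

theorem NormalIn.sup {X A B : Subgroup G} (hA : NormalIn X A) (hB : NormalIn X B) :
    NormalIn X (A ⊔ B) := by
  refine ⟨sup_le hA.1 hB.1, fun x hx => ?_⟩
  have : (A ⊔ B).map (MulAut.conj x).toMonoidHom ≤ A ⊔ B := by
    rw [Subgroup.map_sup]
    refine sup_le (le_trans ?_ le_sup_left) (le_trans ?_ le_sup_right)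
    · rintro _ ⟨a, ha, rfl⟩
      exact hA.2 x hx a ha
    · rintro _ ⟨a, ha, rfl⟩
      exact hB.2 x hx a ha
  intro a ha
  exact this ⟨a, ha, rfl⟩

theorem piCore_mem {σ : Set ℕ} {X : Subgroup G} [Finite G] :
    NormalIn X (piCore σ X) ∧ IsPiNumber σ (Nat.card (piCore σ X)) := by
  classical
  have key : ∀ s : Set (Subgroup G), s ⊆ {K | NormalIn X K ∧ IsPiNumber σ (Nat.card K)} →
      NormalIn X (sSup s) ∧ IsPiNumber σ (Nat.card ((sSup s : Subgroup G))) := by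
    intro s
    refine Set.Finite.induction_on
      (motive := fun s _ => s ⊆ {K | NormalIn X K ∧ IsPiNumber σ (Nat.card K)} →
        NormalIn X (sSup s) ∧ IsPiNumber σ (Nat.card ((sSup s : Subgroup G))))
      s (Set.toFinite s) ?_ ?_
    · intro _
      rw [sSup_empty]
      constructor
      · exact ⟨bot_le, fun x hx a ha => by
          have : a = 1 := by simpa using ha
          subst this; simp⟩
      · have hbot : Nat.card ((⊥ : Subgroup G)) = 1 := Subgroup.card_bot
        rw [hbot]; exact pi_one
    · intro K s' _ _ ih hs
      have hK := hs (Set.mem_insert K s')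
      have hs' := ih (fun L hL => hs (Set.mem_insert_of_mem _ hL))
      rw [sSup_insert]
      refine ⟨hK.1.sup hs'.1, ?_⟩
      exact pi_of_dvd (pi_mul hK.2 hs'.2) (card_sup_dvd hK.1 hs'.1)
  exact key _ (le_refl _)

theorem piCore_pi {σ : Set ℕ} {X : Subgroup G} [Finite G] :
    IsPiNumber σ (Nat.card (piCore σ X)) := piCore_mem.2

theorem piCore_normalIn {σ : Set ℕ} {X : Subgroup G} [Finite G] :
    NormalIn X (piCore σ X) := piCore_mem.1

theorem mem_of_conj_eq {S : Subgroup G} {g : G}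
    (hg : S.map (MulAut.conj g).toMonoidHom = S) {y : G} :
    y ∈ S ↔ g * y * g⁻¹ ∈ S := by
  constructor
  · intro hy
    rw [← hg]
    exact ⟨y, hy, rfl⟩
  · intro hy
    rw [← hg] at hy
    obtain ⟨z, hz, hzz⟩ := hy
    have hzy : z = y := by
      have h1 : g * z * g⁻¹ = g * y * g⁻¹ := by
        simpa [MulAut.conj_apply, mul_assoc] using hzz
      have := congrArg (fun w => g⁻¹ * w * g) h1
      simpa [mul_assoc] using this
    exact hzy ▸ hz

/-- If `g` normalizes `X`, then `g` normalizes `piCore σ X`. -/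
theorem piCore_conj {σ : Set ℕ} {X : Subgroup G} (g : G)
    (hg : X.map (MulAut.conj g).toMonoidHom = X) :
    (piCore σ X).map (MulAut.conj g).toMonoidHom ≤ piCore σ X := by
  unfold piCore
  rw [(Subgroup.gc_map_comap _).l_sSup]
  refine iSup_le fun K => iSup_le fun hK => ?_
  refine le_sSup ⟨⟨?_, ?_⟩, ?_⟩
  · rw [← hg]
    exact Subgroup.map_mono hK.1.1
  · intro x hx a ha
    obtain ⟨a', ha', rfl⟩ := ha
    have hx' : g⁻¹ * x * g ∈ X := by
      rw [mem_of_conj_eq hg]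
      simpa [mul_assoc] using hx
    refine ⟨(g⁻¹ * x * g) * a' * (g⁻¹ * x * g)⁻¹, hK.1.2 _ hx' a' ha', ?_⟩
    simp only [MulEquiv.coe_toMonoidHom, MulAut.conj_apply]
    group
  · refine pi_of_dvd hK.2 (dvd_of_eq (Nat.card_congr ?_))
    exact (Subgroup.equivMapOfInjective K _ (MulAut.conj g).injective).symm.toEquiv

end Aux

namespace Aux

theorem conj_eq_of {G : Type} [Group G] {X : Subgroup G} {x : G}
    (h1 : ∀ a ∈ X, x * a * x⁻¹ ∈ X) (h2 : ∀ a ∈ X, x⁻¹ * a * x ∈ X) :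
    X.map (MulAut.conj x).toMonoidHom = X := by
  apply le_antisymm
  · rintro _ ⟨a, ha, rfl⟩
    simpa [MulAut.conj_apply] using h1 a ha
  · intro a ha
    refine ⟨x⁻¹ * a * x, h2 a ha, ?_⟩
    simp only [MulEquiv.coe_toMonoidHom, MulAut.conj_apply]
    group

theorem dichotomy {G : Type} [Group G] [Finite G] (π : Set ℕ) (hsep : IsPiSeparable π G)
    (N : Subgroup G) (hN : N.Normal) (hNne : N ≠ ⊥)
    (hmin : ∀ N' : Subgroup G, N'.Normal → N' ≤ N → N' = ⊥ ∨ N' = N) :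
    IsPiNumber π (Nat.card N) ∨ IsPiNumber πᶜ (Nat.card N) := by
  obtain ⟨n, H, h0, hlast, hstep⟩ := hsep
  set A : Fin (n+1) → Subgroup G := fun i => N ⊓ H i with hA
  have hA0 : A 0 = ⊥ := by simp [hA, h0]
  have hAlast : A (Fin.last n) = N := by simp [hA, hlast]
  -- find the first step where the intersection becomes nontrivial
  have hex : ∃ k : Fin n, A k.castSucc = ⊥ ∧ A k.succ ≠ ⊥ := by
    by_contra hcon
    push_neg at hcon
    have hall : ∀ m : ℕ, ∀ hm : m ≤ n, A ⟨m, Nat.lt_succ_of_le hm⟩ = ⊥ := by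
      intro m
      induction m with
      | zero => intro _; convert hA0; simp
      | succ m ih =>
          intro hm
          have hmn : m < n := hm
          have h1 : A (⟨m, hmn⟩ : Fin n).castSucc = ⊥ := by
            convert ih (le_of_lt hmn) using 2; rfl
      
          have := hcon ⟨m, hmn⟩ h1
          convert this using 2; rfl
    have hlast' := hall n le_rfl
    apply hNne
    rw [← hAlast]
    exact hlast'
  obtain ⟨k, hkbot, hkne⟩ := hex
  have hQ := (hstep k).2.2
  haveI : ((H k.castSucc).subgroupOf (H k.succ)).Normal := (hstep k).2.1
  -- the general claim for σ = π or πᶜ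
  have main : ∀ σ : Set ℕ,
      IsPiNumber σ (Nat.card (H k.succ ⧸ (H k.castSucc).subgroupOf (H k.succ))) →
      IsPiNumber σ (Nat.card N) := by
    intro σ hσQ
    -- card of A k.succ divides card of the factor
    have hσA : IsPiNumber σ (Nat.card (A k.succ)) := by
      refine pi_of_dvd hσQ ?_
      have hle : A k.succ ≤ H k.succ := inf_le_right
      set φ : ↥(A k.succ) →* (H k.succ ⧸ (H k.castSucc).subgroupOf (H k.succ)) :=
        (QuotientGroup.mk' _).comp (Subgroup.inclusion hle) with hφ
      have hinj : Function.Injective φ := by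
        rw [← MonoidHom.ker_eq_bot_iff]
        rw [eq_bot_iff]
        intro a ha
        have : Subgroup.inclusion hle a ∈ (H k.castSucc).subgroupOf (H k.succ) := by
          rwa [MonoidHom.mem_ker, hφ, MonoidHom.comp_apply, QuotientGroup.mk'_apply,
            QuotientGroup.eq_one_iff] at ha
        have h2 : (a : G) ∈ H k.castSucc := this
        have h3 : (a : G) ∈ A k.castSucc := ⟨(a.2 : (a:G) ∈ N ⊓ H k.succ).1, h2⟩
        rw [hkbot] at h3
        exact Subgroup.mem_bot.mpr (Subtype.ext h3)
      calc Nat.card (A k.succ) = Nat.card φ.range := Nat.card_congr (MonoidHom.ofInjective hinj).toEquiv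
        _ ∣ _ := Subgroup.card_subgroup_dvd_card φ.range
    -- the ℕ-indexed chain
    set A' : ℕ → Subgroup G := fun m => N ⊓ H ⟨min m n, by omega⟩ with hA'
    have hA'big : ∀ m, n ≤ m → A' m = N := by
      intro m hm
      have : (⟨min m n, by omega⟩ : Fin (n+1)) = Fin.last n := by
        apply Fin.ext; simp [Fin.last]; omega
      simp [hA', this, hlast]
    have hA'k : A' ((k : ℕ) + 1) = A k.succ := by
      have : (⟨min ((k:ℕ)+1) n, by omega⟩ : Fin (n+1)) = k.succ := by
        apply Fin.ext; simp [Fin.succ]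
      simp [hA', this, hA]; rfl
    have hchain : ∀ m, A' m ≤ A' (m+1) ∧ ∀ x ∈ A' (m+1), ∀ a ∈ A' m, x * a * x⁻¹ ∈ A' m := by
      intro m
      by_cases hm : m < n
      · have e1 : (⟨min m n, by omega⟩ : Fin (n+1)) = (⟨m, hm⟩ : Fin n).castSucc := by
          apply Fin.ext; simp [Fin.castSucc]; omega
        have e2 : (⟨min (m+1) n, by omega⟩ : Fin (n+1)) = (⟨m, hm⟩ : Fin n).succ := by
          apply Fin.ext; simp [Fin.succ]; omega
        constructor
        · rw [hA']; simp only [e1, e2]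
          exact inf_le_inf_left N (hstep ⟨m, hm⟩).1
        · intro x hx a ha
          rw [hA'] at hx ha ⊢
          simp only [e1, e2] at hx ha ⊢
          obtain ⟨hxN, hxH⟩ := hx
          obtain ⟨haN, haH⟩ := ha
          refine ⟨hN.conj_mem a haN x, ?_⟩
          have haH' : (⟨a, (hstep ⟨m, hm⟩).1 haH⟩ : H (⟨m, hm⟩ : Fin n).succ) ∈
              (H (⟨m, hm⟩ : Fin n).castSucc).subgroupOf (H (⟨m, hm⟩ : Fin n).succ) := haH
          have := ((hstep ⟨m, hm⟩).2.1).conj_mem _ haH' ⟨x, hxH⟩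
          exact this
      · have e : A' m = A' (m+1) := by
          rw [hA'big m (le_of_not_gt hm), hA'big (m+1) (by omega)]
        constructor
        · rw [e]
        · intro x hx a ha
          rw [← e] at hx
          exact (A' m).mul_mem ((A' m).mul_mem hx ha) ((A' m).inv_mem hx)
    -- climbing the chain
    have climb : ∀ m, A k.succ ≤ piCore σ (A' ((k:ℕ) + 1 + m)) := by
      intro m
      induction m with
      | zero =>
          rw [Nat.add_zero, hA'k]
          exact le_piCore (NormalIn.refl _) hσA
      | succ m ih =>
          refine le_trans ih ?_
          have hc := hchain ((k:ℕ) + 1 + m)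
          have hstep' : piCore σ (A' ((k:ℕ)+1+m)) ≤ piCore σ (A' ((k:ℕ)+1+m+1)) := by
            refine le_piCore ⟨le_trans piCore_le hc.1, ?_⟩ piCore_pi
            intro x hx a ha
            have hconj : (A' ((k:ℕ)+1+m)).map (MulAut.conj x).toMonoidHom = A' ((k:ℕ)+1+m) := by
              refine conj_eq_of (hc.2 x hx) ?_
              intro b hb
              have hxinv : x⁻¹ ∈ A' ((k:ℕ)+1+m+1) := (A' _).inv_mem hx
              simpa using hc.2 x⁻¹ hxinv b hb
            exact piCore_conj x hconj ⟨a, ha, rfl⟩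
          have : (k:ℕ) + 1 + (m + 1) = (k:ℕ)+1+m+1 := by omega
          rw [this]
          exact hstep'
    have hfinal := climb n
    rw [hA'big ((k:ℕ)+1+n) (by omega)] at hfinal
    -- piCore σ N is normal in G
    set P := piCore σ (N) with hP
    have hPN : P ≤ N := piCore_le
    have hPnormal : P.Normal := by
      constructor
      intro p hp g
      have hconj : (N).map (MulAut.conj g).toMonoidHom = N :=
        conj_eq_of (fun a ha => hN.conj_mem a ha g) (fun a ha => by simpa using hN.conj_mem a ha g⁻¹)
      exact piCore_conj g hconj ⟨p, hp, rfl⟩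
    have hPne : P ≠ ⊥ := by
      intro hbot
      apply hkne
      rw [eq_bot_iff, ← hbot]
      exact hfinal
    have hPeq : P = N := (hmin P hPnormal hPN).resolve_left hPne
    have : IsPiNumber σ (Nat.card P) := piCore_pi
    rwa [hPeq] at this
  rcases hQ with hQ | hQ
  · exact Or.inl (main π hQ)
  · exact Or.inr (main πᶜ hQ)

end Aux

namespace RAux
variable {G : Type} [Group G]

def InvariantSub (V : FDRep ℂ G) (U : Submodule ℂ V) : Prop := ∀ (g : G), ∀ x ∈ U, V.ρ g x ∈ U

/-- The subrepresentation on an invariant subspace. -/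
noncomputable def subRep (V : FDRep ℂ G) (U : Submodule ℂ V) (hU : InvariantSub V U) : FDRep ℂ G :=
  FDRep.of {
    toFun := fun g => (V.ρ g).restrict (fun x hx => hU g x hx)
    map_one' := by ext x; simp [LinearMap.restrict_apply]
    map_mul' := by intro g h; ext x; simp [LinearMap.restrict_apply] }

/-- The inclusion morphism of a subrepresentation. -/
noncomputable def subRepIncl (V : FDRep ℂ G) (U : Submodule ℂ V) (hU : InvariantSub V U) :
    subRep V U hU ⟶ V where
  hom := FGModuleCat.ofHom U.subtype
  comm := fun g => by ext x; rfl

theorem subRepIncl_hom (V : FDRep ℂ G) (U : Submodule ℂ V) (hU : InvariantSub V U) :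
    (subRepIncl V U hU).hom.hom.hom = U.subtype := rfl

theorem subRep_ρ (V : FDRep ℂ G) (U : Submodule ℂ V) (hU : InvariantSub V U) (g : G) (x : U) :
    U.subtype ((subRep V U hU).ρ g x) = V.ρ g (U.subtype x) := rfl

theorem hom_apply_comm {V W : FDRep ℂ G} (f : V ⟶ W) (g : G) (v : V) :
    f.hom (V.ρ g v) = W.ρ g (f.hom v) := by
  have := f.comm g
  have h2 := congrArg (fun (p : V.V ⟶ W.V) => p.hom.hom v) this
  exact h2


/-- A monomorphism of `FDRep`s is injective on the underlying spaces. -/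
theorem injective_of_mono {V W : FDRep ℂ G} (f : V ⟶ W) [Mono f] :
    Function.Injective f.hom := by
  set K := LinearMap.ker (f.hom.hom.hom : V →ₗ[ℂ] W) with hK
  have hKinv : InvariantSub V K := by
    intro g x hx
    have hx0 : f.hom x = 0 := hx
    have h1 : f.hom (V.ρ g x) = W.ρ g (f.hom x) := hom_apply_comm f g x
    rw [hx0, map_zero] at h1
    exact h1
  have hcomp0 : subRepIncl V K hKinv ≫ f = 0 := by
    apply Action.hom_ext
    rw [Action.comp_hom, Action.zero_hom]
    apply FGModuleCat.hom_ext
    apply LinearMap.ext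
    intro x
    exact x.2
  have h0 : subRepIncl V K hKinv = 0 :=
    (CategoryTheory.cancel_mono f).mp (by rw [hcomp0, Limits.zero_comp])
  have hKbot : K = ⊥ := by
    rw [eq_bot_iff]
    intro x hx
    have h1 : x = (subRepIncl V K hKinv).hom ⟨x, hx⟩ := rfl
    rw [h0] at h1
    simp only [Submodule.mem_bot]
    rw [h1]
    rfl
  rw [← LinearMap.ker_eq_bot]
  exact hKbot

/-- A nonzero invariant subspace of a simple representation is everything. -/
theorem top_of_invariant {V : FDRep ℂ G} [Simple V] {U : Submodule ℂ V}
    (hU : InvariantSub V U) (hne : U ≠ ⊥) : U = ⊤ := by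
  set ι := subRepIncl V U hU with hι
  haveI : Mono ι := by
    constructor
    intro Z g h hgh
    apply Action.hom_ext
    have h2 : g.hom ≫ ι.hom = h.hom ≫ ι.hom := by
      rw [← Action.comp_hom, ← Action.comp_hom, hgh]
    apply FGModuleCat.hom_ext
    apply LinearMap.ext
    intro z
    apply Subtype.ext
    have h3 : ι.hom (g.hom z) = ι.hom (h.hom z) :=
      congrArg (fun (p : Z.V ⟶ V.V) => p z) h2
    exact h3
  have hι0 : ι ≠ 0 := by
    intro h0
    obtain ⟨u, hu, hune⟩ := (Submodule.ne_bot_iff U).mp hne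
    have h1 : u = ι.hom ⟨u, hu⟩ := rfl
    rw [h0] at h1
    exact hune (by rw [h1]; rfl)
  haveI := isIso_of_mono_of_nonzero (Y := V) hι0
  rw [eq_top_iff]
  intro v _
  have hcomp : (inv ι ≫ ι) = 𝟙 V := IsIso.inv_hom_id ι
  have h4 : (inv ι).hom ≫ ι.hom = 𝟙 V.V := by
    rw [← Action.comp_hom, hcomp]; rfl
  have h1 : ι.hom ((inv ι).hom v) = v :=
    congrArg (fun (p : V.V ⟶ V.V) => p v) h4
  have hmem : ι.hom ((inv ι).hom v) ∈ U := ((inv ι).hom v).2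
  rwa [h1] at hmem

/-- A representation with no nontrivial invariant subspaces is simple. -/
theorem simple_of_no_invariant {V : FDRep ℂ G} (hnt : Nontrivial V)
    (hsimp : ∀ U : Submodule ℂ V, InvariantSub V U → U ≠ ⊥ → U = ⊤) : Simple V := by
  constructor
  intro Y f hf
  constructor
  · intro hiso h0
    haveI := hiso
    have hcomp : (inv f ≫ f) = 𝟙 V := IsIso.inv_hom_id f
    obtain ⟨v, w, hvw⟩ := hnt
    apply hvw
    have h4 : (inv f).hom ≫ f.hom = 𝟙 V.V := by
      rw [← Action.comp_hom, hcomp]; rfl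
    have hv : f.hom ((inv f).hom v) = v := congrArg (fun (p : V.V ⟶ V.V) => p v) h4
    have hw : f.hom ((inv f).hom w) = w := congrArg (fun (p : V.V ⟶ V.V) => p w) h4
    have hz : f.hom = 0 := by rw [h0]; exact Action.zero_hom
    rw [hz] at hv hw
    have hza : ∀ x : Y, (0 : Y.V ⟶ V.V) x = 0 := fun _ => rfl
    rw [← hv, ← hw, hza, hza]
  · intro hne
    have hinj : Function.Injective f.hom := injective_of_mono f
    set U := LinearMap.range (f.hom.hom.hom : Y →ₗ[ℂ] V) with hU
    have hUinv : InvariantSub V U := by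
      rintro g _ ⟨y, rfl⟩
      exact ⟨Y.ρ g y, hom_apply_comm f g y⟩
    have hUne : U ≠ ⊥ := by
      intro hbot
      apply hne
      apply Action.hom_ext
      rw [Action.zero_hom]
      apply FGModuleCat.hom_ext
      apply LinearMap.ext
      intro y
      have hmem : f.hom y ∈ U := ⟨y, rfl⟩
      rw [hbot] at hmem
      exact (Submodule.mem_bot ℂ).mp hmem
    have hUtop : U = ⊤ := hsimp U hUinv hUne
    have hbij : Function.Bijective f.hom := ⟨hinj, by
      intro v
      have hmem : v ∈ U := hUtop ▸ Submodule.mem_top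
      exact hmem⟩
    set e := LinearEquiv.ofBijective (f.hom.hom.hom : Y →ₗ[ℂ] V) hbij with he
    refine ⟨⟨⟨FGModuleCat.ofHom e.symm.toLinearMap, ?_⟩, ?_, ?_⟩⟩
    · intro g
      apply FGModuleCat.hom_ext
      apply LinearMap.ext
      intro v
      apply hinj
      show f.hom (e.symm (V.ρ g v)) = f.hom (Y.ρ g (e.symm v))
      have h1 : ∀ u, f.hom (e.symm u) = u := fun u => e.apply_symm_apply u
      rw [h1, hom_apply_comm f g (e.symm v), h1]
    · apply Action.hom_ext
      rw [Action.comp_hom]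
      apply FGModuleCat.hom_ext
      apply LinearMap.ext
      intro y
      show e.symm (f.hom y) = y
      exact e.symm_apply_apply y
    · apply Action.hom_ext
      rw [Action.comp_hom]
      apply FGModuleCat.hom_ext
      apply LinearMap.ext
      intro v
      show f.hom (e.symm v) = v
      exact e.apply_symm_apply v


/-- The quotient representation by an invariant subspace. -/
noncomputable def quotRep (V : FDRep ℂ G) (U : Submodule ℂ V) (hU : InvariantSub V U) :
    FDRep ℂ G :=
  FDRep.of {
    toFun := fun g => Submodule.mapQ U U (V.ρ g) (fun x hx => hU g x hx)
    map_one' := by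
      apply Submodule.linearMap_qext
      apply LinearMap.ext
      intro x
      simp [Submodule.mapQ_apply]
    map_mul' := by
      intro g h
      apply Submodule.linearMap_qext
      apply LinearMap.ext
      intro x
      simp [Submodule.mapQ_apply] }

theorem quotRep_mk (V : FDRep ℂ G) (U : Submodule ℂ V) (hU : InvariantSub V U) (g : G) (x : V) :
    (quotRep V U hU).ρ g (U.mkQ x) = U.mkQ (V.ρ g x) := by
  show Submodule.mapQ U U (V.ρ g) (fun y hy => hU g y hy) (Submodule.Quotient.mk x)
      = Submodule.Quotient.mk (V.ρ g x)
  rw [Submodule.mapQ_apply]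

theorem all_trivial [Finite G] {n : G}
    (hsimple : ∀ V : FDRep ℂ G, Simple V → V.ρ n = 1) :
    ∀ V : FDRep ℂ G, V.ρ n = 1 := by
  suffices H : ∀ d (V : FDRep ℂ G), Module.finrank ℂ V ≤ d → V.ρ n = 1 by
    exact fun V => H (Module.finrank ℂ V) V le_rfl
  intro d
  induction d with
  | zero =>
      intro V hV
      haveI : Subsingleton V := Module.finrank_zero_iff.mp (Nat.le_zero.mp hV)
      apply LinearMap.ext
      intro x
      exact Subsingleton.elim _ _
  | succ d ih =>
      intro V hV
      by_cases hnt : Nontrivial V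
      swap
      · haveI : Subsingleton V := not_nontrivial_iff_subsingleton.mp hnt
        apply LinearMap.ext
        intro x
        exact Subsingleton.elim _ _
      -- find an invariant subspace of minimal positive dimension
      have hPne : ∃ d', ∃ U : Submodule ℂ V, InvariantSub V U ∧ U ≠ ⊥ ∧ Module.finrank ℂ U = d' :=
        ⟨Module.finrank ℂ V, ⊤, fun g x _ => Submodule.mem_top, by
          intro hbot
          obtain ⟨v, w, hvw⟩ := hnt
          apply hvw
          have hv : v ∈ (⊥ : Submodule ℂ V) := hbot ▸ Submodule.mem_top
          have hw : w ∈ (⊥ : Submodule ℂ V) := hbot ▸ Submodule.mem_top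
          rw [Submodule.mem_bot] at hv hw
          rw [hv, hw], by rw [Submodule.topEquiv.finrank_eq]⟩
      classical
      set d₀ := Nat.find hPne with hd₀
      obtain ⟨U, hUinv, hUne, hUrank⟩ := Nat.find_spec hPne
      have hminimal : ∀ d' < d₀, ¬ ∃ U : Submodule ℂ V, InvariantSub V U ∧ U ≠ ⊥ ∧
          Module.finrank ℂ U = d' := fun d' hd' => Nat.find_min hPne hd'
      haveI : Nontrivial U := Submodule.nontrivial_iff_ne_bot.mpr hUne
      -- the subrepresentation is simple
      have hsimp : Simple (subRep V U hUinv) := by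
        apply simple_of_no_invariant
        · exact (inferInstance : Nontrivial U)
        · intro X hXinv hXne
          set X' : Submodule ℂ V := X.map U.subtype with hX'
          have hX'inv : InvariantSub V X' := by
            rintro g _ ⟨x, hx, rfl⟩
            refine ⟨(subRep V U hUinv).ρ g x, hXinv g x hx, ?_⟩
            exact (subRep_ρ V U hUinv g x).symm ▸ rfl
          have hX'ne : X' ≠ ⊥ := by
            intro hbot
            apply hXne
            rw [eq_bot_iff]
            intro x hx
            have : U.subtype x ∈ X' := ⟨x, hx, rfl⟩
            rw [hbot, Submodule.mem_bot] at this
            rw [Submodule.mem_bot]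
            exact Subtype.ext this
          have hX'rank : Module.finrank ℂ X' = Module.finrank ℂ X :=
            Submodule.finrank_map_subtype_eq U X
          have hge : d₀ ≤ Module.finrank ℂ X' := by
            by_contra hlt
            exact hminimal _ (lt_of_not_ge hlt) ⟨X', hX'inv, hX'ne, rfl⟩
          have hle : Module.finrank ℂ X ≤ Module.finrank ℂ U := X.finrank_le
          have : Module.finrank ℂ X = Module.finrank ℂ U := by omega
          exact Submodule.eq_top_of_finrank_eq this
      have h0 : (subRep V U hUinv).ρ n = 1 := hsimple _ hsimp
      have hUfix : ∀ x ∈ U, V.ρ n x = x := by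
        intro x hx
        have h1 : U.subtype ((subRep V U hUinv).ρ n ⟨x, hx⟩) = V.ρ n x := subRep_ρ V U hUinv n ⟨x, hx⟩
        rw [h0] at h1
        exact h1.symm
      -- quotient has smaller dimension
      have hd₀pos : 0 < Module.finrank ℂ U := Module.finrank_pos
      have hqrank : Module.finrank ℂ (V ⧸ U) ≤ d := by
        have := Submodule.finrank_quotient_add_finrank U
        omega
      have hq : (quotRep V U hUinv).ρ n = 1 := ih (quotRep V U hUinv) hqrank
      have hsub : ∀ v : V, V.ρ n v - v ∈ U := by
        intro v
        have h1 : U.mkQ (V.ρ n v) = U.mkQ v := by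
          rw [← quotRep_mk V U hUinv n v, hq]
          rfl
        exact (Submodule.Quotient.eq U).mp h1

      -- unipotent of finite order is trivial
      set D : Module.End ℂ V := V.ρ n - 1 with hD
      have hD2 : D * D = 0 := by
        apply LinearMap.ext
        intro v
        have h1 : D v ∈ U := by
          simpa [hD, LinearMap.sub_apply] using hsub v
        have h3 : V.ρ n (D v) = D v := hUfix _ h1
        have h4 : D (D v) = V.ρ n (D v) - D v := rfl
        show D (D v) = 0
        rw [h4, h3, sub_self]
      have hpow : ∀ k : ℕ, (1 + D) ^ (k + 1) = 1 + (k + 1) • D := by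
        intro k
        induction k with
        | zero => simp
        | succ k ihk =>
            rw [pow_succ, ihk, mul_add, mul_one, add_mul, one_mul, smul_mul_assoc, hD2,
              smul_zero, add_zero, succ_nsmul D (k+1)]
            abel
      obtain ⟨m, hm⟩ : ∃ m, orderOf n = m + 1 := by
        have := orderOf_pos n
        exact ⟨orderOf n - 1, by omega⟩
      have hone : (1 + D) ^ (m + 1) = 1 := by
        have h1 : (1 + D) = V.ρ n := by rw [hD]; abel
        rw [h1, ← map_pow, ← hm, pow_orderOf_eq_one, map_one]
      rw [hpow m] at hone
      have hD0 : (m + 1) • D = 0 := by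
        have := congrArg (fun x => x - (1 : Module.End ℂ V)) hone
        simpa using this
      have : ((m + 1 : ℕ) : ℂ) • D = 0 := by
        rw [Nat.cast_smul_eq_nsmul]
        exact_mod_cast hD0
      have hDz : D = 0 := by
        rcases smul_eq_zero.mp this with h | h
        · exact absurd h (by
            have : ((m + 1 : ℕ) : ℂ) ≠ 0 := Nat.cast_ne_zero.mpr (Nat.succ_ne_zero m)
            exact this)
        · exact h
      have := congrArg (fun x => x + (1 : Module.End ℂ V)) (hD ▸ hDz : V.ρ n - 1 = 0)
      simpa using this

theorem eq_one_of_triv_on_simples [Finite G] {n : G}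
    (hsimple : ∀ V : FDRep ℂ G, Simple V → V.ρ n = 1) : n = 1 := by
  haveI := Fintype.ofFinite G
  haveI : FiniteDimensional ℂ (G →₀ ℂ) :=
    Module.Finite.equiv (Finsupp.linearEquivFunOnFinite ℂ ℂ G).symm
  set P := FDRep.of (Representation.ofMulAction ℂ G G) with hP
  have h := all_trivial hsimple P
  have h1 : (Representation.ofMulAction ℂ G G) n (MonoidAlgebra.single (1:G) (1:ℂ))
      = MonoidAlgebra.single (1:G) (1:ℂ) := by
    rw [show (Representation.ofMulAction ℂ G G) n = P.ρ n from rfl, h]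
    rfl
  rw [Representation.ofMulAction_single] at h1
  have h2 : n • (1:G) = 1 := by
    by_contra hne
    have := MonoidAlgebra.single_inj.mp h1
    rcases this with ⟨h3, _⟩ | ⟨h3, _⟩
    · exact hne h3
    · exact one_ne_zero h3
  simpa [smul_eq_mul] using h2

end RAux

namespace PAux

open CategoryTheory

variable {G : Type} [Group G]

/-- The permutation representation on `G ⧸ M`. -/
noncomputable def permRep [Finite G] (M : Subgroup G) : FDRep ℂ G := by
  haveI : FiniteDimensional ℂ ((G ⧸ M) →₀ ℂ) :=
    Module.Finite.equiv (Finsupp.linearEquivFunOnFinite ℂ ℂ _).symm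
  exact FDRep.of (Representation.ofMulAction ℂ G (G ⧸ M))

theorem permRep_ρ [Finite G] (M : Subgroup G) :
    (permRep M).ρ = Representation.ofMulAction ℂ G (G ⧸ M) := rfl

/-- Character of the permutation representation: number of fixed points. -/
theorem permRep_char [Finite G] (M : Subgroup G) (g : G) :
    (permRep M).character g = (Nat.card {c : G ⧸ M // g • c = c} : ℂ) := by
  haveI := Fintype.ofFinite (G ⧸ M)
  rw [Nat.card_eq_fintype_card, Fintype.card_subtype]
  show LinearMap.trace ℂ (MonoidAlgebra ℂ (G ⧸ M)) (Representation.ofMulAction ℂ G (G ⧸ M) g) = _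
  rw [LinearMap.trace_eq_matrix_trace ℂ (MonoidAlgebra.basis (G ⧸ M) ℂ)
    (Representation.ofMulAction ℂ G (G ⧸ M) g), Matrix.trace]
  have h2 : ∀ c : G ⧸ M,
      (LinearMap.toMatrix (MonoidAlgebra.basis (G ⧸ M) ℂ) (MonoidAlgebra.basis (G ⧸ M) ℂ)
        (Representation.ofMulAction ℂ G (G ⧸ M) g)).diag c
        = if g • c = c then (1:ℂ) else 0 := by
    intro c
    rw [Matrix.diag, LinearMap.toMatrix_apply, MonoidAlgebra.basis_apply,
      Representation.ofMulAction_single]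
    show (MonoidAlgebra.single (g • c) (1:ℂ)).coeff c = _
    rw [MonoidAlgebra.coeff_single, Finsupp.single_apply]
  rw [Finset.sum_congr rfl (fun c _ => h2 c), Finset.sum_boole]


/-- The induced character `(1_M)^G` counts fixed points. -/
theorem permChar_eq [Finite G] (M : Subgroup G) (g : G) :
    permChar M g = (Nat.card {c : G ⧸ M // g • c = c} : ℂ) := by
  haveI := Fintype.ofFinite G
  haveI := Fintype.ofFinite (G ⧸ M)
  rw [permChar, indChar, finsum_eq_sum_of_fintype]
  have h1 : ∀ x : G, (if h : x * g * x⁻¹ ∈ M then (1:ℂ) else 0)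
      = if x * g * x⁻¹ ∈ M then (1:ℂ) else 0 := fun x => by
    split <;> rfl
  rw [Finset.sum_congr rfl (fun x _ => h1 x), Finset.sum_boole]
  -- inversion bijection
  have hbij : (Finset.univ.filter (fun x : G => x * g * x⁻¹ ∈ M)).card
      = (Finset.univ.filter (fun y : G => y⁻¹ * g * y ∈ M)).card := by
    apply Finset.card_bij (fun x _ => x⁻¹)
    · intro a ha
      simp only [Finset.mem_filter, Finset.mem_univ, true_and] at ha ⊢
      simpa using ha
    · intro a _ b _ hab
      exact inv_injective hab
    · intro b hb
      simp only [Finset.mem_filter, Finset.mem_univ, true_and] at hb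
      exact ⟨b⁻¹, by simp only [Finset.mem_filter, Finset.mem_univ, true_and]; simpa using hb, by simp⟩
  -- fiberwise counting over the quotient
  have hfibcond : ∀ (c : G ⧸ M) (y : G), (QuotientGroup.mk y : G ⧸ M) = c →
      (y⁻¹ * g * y ∈ M ↔ g • c = c) := by
    intro c y hyc
    subst hyc
    have : (g • (QuotientGroup.mk y : G ⧸ M) = QuotientGroup.mk y) ↔ y⁻¹ * g⁻¹ * y ∈ M := by
      show ((QuotientGroup.mk (g * y) : G ⧸ M) = QuotientGroup.mk y) ↔ _
      rw [QuotientGroup.eq]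
      constructor
      · intro h; convert h using 1; group
      · intro h; convert h using 1; group
    rw [this]
    rw [show y⁻¹ * g * y = (y⁻¹ * g⁻¹ * y)⁻¹ by group]
    exact Subgroup.inv_mem_iff M
  have hcount : (Finset.univ.filter (fun y : G => y⁻¹ * g * y ∈ M)).card
      = (Finset.univ.filter (fun c : G ⧸ M => g • c = c)).card * Fintype.card M := by
    rw [Finset.card_eq_sum_card_fiberwise
      (f := fun y : G => (QuotientGroup.mk y : G ⧸ M))
      (t := Finset.univ.filter (fun c : G ⧸ M => g • c = c))
      (fun y hy => by
        simp only [Finset.coe_filter, Finset.mem_coe, Finset.mem_filter, Finset.mem_univ, true_and,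
          Set.mem_setOf_eq] at hy ⊢
        exact (hfibcond _ y rfl).mp hy)]
    rw [Finset.sum_congr rfl (fun c hc => ?_), Finset.sum_const, smul_eq_mul]
    -- each fiber has cardinality |M|
    simp only [Finset.mem_filter, Finset.mem_univ, true_and] at hc
    have hfix : (Finset.univ.filter (fun y : G => y⁻¹ * g * y ∈ M)).filter
        (fun y => (QuotientGroup.mk y : G ⧸ M) = c)
        = Finset.univ.filter (fun y : G => (QuotientGroup.mk y : G ⧸ M) = c) := by
      ext y
      simp only [Finset.mem_filter, Finset.mem_univ, true_and]
      constructor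
      · exact fun h => h.2
      · exact fun h => ⟨(hfibcond c y h).mpr hc, h⟩
    rw [hfix]
    rw [← Finset.card_univ (α := M)]
    have houtc : (QuotientGroup.mk c.out : G ⧸ M) = c := QuotientGroup.out_eq' c
    apply Finset.card_bij (fun (y : G) hy => (⟨c.out⁻¹ * y, by
        simp only [Finset.mem_filter, Finset.mem_univ, true_and] at hy
        exact QuotientGroup.eq.mp (houtc.trans hy.symm)⟩ : M))
    · intro a ha
      exact Finset.mem_univ _
    · intro a ha b hb hab
      have := congrArg (fun (m : M) => (m : G)) hab
      simpa using mul_left_cancel this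
    · intro m _
      refine ⟨c.out * m, ?_, ?_⟩
      · simp only [Finset.mem_filter, Finset.mem_univ, true_and]
        rw [← houtc]
        exact (QuotientGroup.eq.mpr (by simpa using m.2)).symm
      · apply Subtype.ext
        simp [mul_assoc]
  rw [hbij, hcount]
  rw [Nat.card_eq_fintype_card (α := M), Nat.card_eq_fintype_card, Fintype.card_subtype]
  have hM : (Fintype.card M : ℂ) ≠ 0 := Nat.cast_ne_zero.mpr Fintype.card_ne_zero
  push_cast
  field_simp
  have hfM : (((Finset.univ.filter (fun x : G => x ∈ M)).card : ℕ) : ℂ) ≠ 0 := by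
    rw [← Fintype.card_subtype]
    exact Nat.cast_ne_zero.mpr Fintype.card_ne_zero
  rw [mul_div_cancel_left₀ _ hfM, Fintype.card_subtype]


/-- A nonzero inner product with the permutation character yields a nonzero morphism. -/
theorem exists_hom_of_inner [Finite G] (M : Subgroup G) (V : FDRep ℂ G)
    (h : charInner G (FDRep.character V) (permChar M) ≠ 0) :
    ∃ f : permRep M ⟶ V, f ≠ 0 := by
  haveI := Fintype.ofFinite G
  set W := permRep M with hW
  haveI : Invertible (Fintype.card G : ℂ) :=
    invertibleOfNonzero (Nat.cast_ne_zero.mpr Fintype.card_ne_zero)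
  -- rewrite the inner product as the average of the character of `linHom W.ρ V.ρ`
  have hmain : charInner G (FDRep.character V) (permChar M)
      = (Module.finrank ℂ (Representation.linHom W.ρ V.ρ).invariants : ℂ) := by
    rw [charInner, finsum_eq_sum_of_fintype]
    have hterm : ∀ g : G, FDRep.character V g * (starRingEnd ℂ) (permChar M g)
        = (FDRep.of (Representation.linHom W.ρ V.ρ)).character g := by
      intro g
      rw [FDRep.char_linHom]
      have h1 : (starRingEnd ℂ) (permChar M g) = W.character g⁻¹ := by
        rw [permChar_eq, map_natCast, permRep_char]
        congr 1
        apply Nat.card_congr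
        refine Equiv.subtypeEquiv (Equiv.refl _) (fun c => ?_)
        simp only [Equiv.refl_apply]
        constructor
        · intro hc
          rw [inv_smul_eq_iff, hc]
        · intro hc
          rw [inv_smul_eq_iff] at hc
          rw [← hc]
      rw [h1, mul_comm]
    rw [Finset.sum_congr rfl (fun g _ => hterm g)]
    have havg := FDRep.average_char_eq_finrank_invariants
      (FDRep.of (Representation.linHom W.ρ V.ρ))
    rw [show (FDRep.of (Representation.linHom W.ρ V.ρ)).ρ = Representation.linHom W.ρ V.ρ from
      FDRep.of_ρ' _] at havg
    rw [Nat.card_eq_fintype_card]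
    refine Eq.trans ?_ havg
    rw [Nat.card_eq_fintype_card]
  have hne : (Representation.linHom W.ρ V.ρ).invariants ≠ ⊥ := by
    intro hbot
    apply h
    rw [hmain, hbot, finrank_bot]
    simp
  obtain ⟨φ, hφmem, hφne⟩ := (Submodule.ne_bot_iff _).mp hne
  have hcomm : ∀ g : G, ∀ w : W, φ (W.ρ g w) = V.ρ g (φ w) := by
    intro g w
    have h1 : (Representation.linHom W.ρ V.ρ) g φ = φ := hφmem g
    rw [Representation.linHom_apply] at h1
    have h2 := congrArg (fun (p : _ →ₗ[ℂ] _) => p (W.ρ g w)) h1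
    simp only [LinearMap.comp_apply] at h2
    have h3 : W.ρ g⁻¹ (W.ρ g w) = w := by
      rw [← Module.End.mul_apply, ← map_mul, inv_mul_cancel, map_one, Module.End.one_apply]
    rw [h3] at h2
    exact h2.symm
  refine ⟨⟨FGModuleCat.ofHom φ, fun g => ?_⟩, fun h0 => ?_⟩
  · apply FGModuleCat.hom_ext
    apply LinearMap.ext
    intro w
    exact hcomm g w
  · apply hφne
    have := congrArg Action.Hom.hom h0
    rw [Action.zero_hom] at this
    exact congrArg (fun (p : W.V ⟶ V.V) => p.hom.hom) this

/-- If `n` acts trivially on `G ⧸ M`, the permutation representation is trivial at `n`. -/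
theorem permRep_triv [Finite G] (M : Subgroup G) (n : G)
    (hn : ∀ x : G, x⁻¹ * n * x ∈ M) : (permRep M).ρ n = 1 := by
  have hfix : ∀ c : G ⧸ M, n • c = c := by
    intro c
    obtain ⟨x, rfl⟩ := QuotientGroup.mk_surjective c
    show (QuotientGroup.mk (n * x) : G ⧸ M) = QuotientGroup.mk x
    rw [QuotientGroup.eq]
    have := hn x
    convert M.inv_mem this using 1
    group
  show Representation.ofMulAction ℂ G (G ⧸ M) n = 1
  apply MonoidAlgebra.lhom_ext'
  intro c
  apply LinearMap.ext
  intro r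
  rw [LinearMap.comp_apply, LinearMap.comp_apply, MonoidAlgebra.lsingle_apply,
    Representation.ofMulAction_single, hfix c]
  rfl

end PAux


/-- If `M ⊔ N = ⊤` with `N` normal, then the index of `M` divides the order of `N`. -/
theorem index_dvd_card_of_sup_eq_top {G : Type} [Group G] [Finite G] {M N : Subgroup G}
    [hN : N.Normal] (hsup : M ⊔ N = ⊤) : M.index ∣ Nat.card N := by
  have hφ : Function.Bijective
      (Quotient.map' (fun (n : N) => (n : G)) (fun a b hab => by
        rw [QuotientGroup.leftRel_apply] at hab ⊢
        exact hab) : N ⧸ (M.subgroupOf N) → G ⧸ M) := by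
    constructor
    · intro a b hab
      induction a using Quotient.inductionOn' with
      | h a =>
        induction b using Quotient.inductionOn' with
        | h b =>
          apply Quotient.sound'
          rw [QuotientGroup.leftRel_apply]
          have hab' : ((a : G) : G ⧸ M) = ((b : G) : G ⧸ M) := hab
          have : (a : G)⁻¹ * (b : G) ∈ M := QuotientGroup.eq.mp hab'
          exact this
    · intro q
      induction q using Quotient.inductionOn' with
      | h g =>
        have hg : g ∈ ((N : Set G) * (M : Set G)) := by
          rw [← Subgroup.normal_mul, sup_comm, hsup]
          trivial
        obtain ⟨n, hn, m, hm, rfl⟩ := hg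
        refine ⟨Quotient.mk'' (⟨n, hn⟩ : N), ?_⟩
        simp only [Quotient.map'_mk'']
        apply Quotient.sound'
        rw [QuotientGroup.leftRel_apply]
        simpa using hm
  have hcard : M.index = (M.subgroupOf N).index := by
    rw [Subgroup.index_eq_card, Subgroup.index_eq_card]
    exact (Nat.card_congr (Equiv.ofBijective _ hφ)).symm
  rw [hcard]
  exact Subgroup.index_dvd_card (M.subgroupOf N)

end AuxiliaryLemmas

/-- If `G` is a finite `π`-separable group in which every irreducible character is a
constituent of `(1_M)^G` for some maximal subgroup `M` of `π`-number index, then every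
minimal normal subgroup `N` of `G` is a `π`-group. -/
theorem stmt19 {G : Type} [Group G] [Finite G] (π : Set ℕ) (hsep : IsPiSeparable π G)
    (h : ∀ χ : G → ℂ, IsIrrChar G χ → ∃ M : Subgroup G, IsCoatom M ∧
      IsPiNumber π M.index ∧ charInner G χ (permChar M) ≠ 0)
    (N : Subgroup G) (hN : N.Normal) (hNne : N ≠ ⊥)
    (hmin : ∀ N' : Subgroup G, N'.Normal → N' ≤ N → N' = ⊥ ∨ N' = N) :
    IsPiNumber π (Nat.card N) := by
  rcases Aux.dichotomy π hsep N hN hNne hmin with hpi | hpi'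
  · exact hpi
  · -- `N` is a `π'`-group; derive a contradiction
    exfalso
    haveI := hN
    have hkey : ∀ V : FDRep ℂ G, CategoryTheory.Simple V → ∀ n ∈ N, V.ρ n = 1 := by
      intro V hV n hn
      obtain ⟨M, hM, hMind, hMne⟩ := h (FDRep.character V) ⟨V, hV, rfl⟩
      have hNM : N ≤ M := by
        by_contra hnle
        have hlt : M < M ⊔ N :=
          lt_of_le_of_ne le_sup_left (fun he => hnle (le_sup_right.trans he.ge))
        have hsup : M ⊔ N = ⊤ := hM.2 _ hlt
        have hdvd : M.index ∣ Nat.card N := index_dvd_card_of_sup_eq_top hsup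
        have hone : M.index = 1 := by
          by_contra hne1
          obtain ⟨p, pp, pd⟩ := Nat.exists_prime_and_dvd hne1
          exact (hpi' p pp (pd.trans hdvd)) (hMind p pp pd)
        exact hM.1 (Subgroup.index_eq_one.mp hone)
      obtain ⟨f, hf⟩ := PAux.exists_hom_of_inner M V hMne
      have htriv : (PAux.permRep M).ρ n = 1 := by
        apply PAux.permRep_triv M n
        intro x
        apply hNM
        have := hN.conj_mem n hn x⁻¹
        simpa using this
      set U := LinearMap.range (f.hom.hom.hom : PAux.permRep M →ₗ[ℂ] V) with hU
      have hUinv : RAux.InvariantSub V U := by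
        rintro g _ ⟨w, rfl⟩
        exact ⟨(PAux.permRep M).ρ g w, RAux.hom_apply_comm f g w⟩
      have hUne : U ≠ ⊥ := by
        intro hbot
        apply hf
        apply Action.hom_ext
        rw [Action.zero_hom]
        apply FGModuleCat.hom_ext
        apply LinearMap.ext
        intro w
        have hmem : f.hom w ∈ U := ⟨w, rfl⟩
        rw [hbot] at hmem
        exact (Submodule.mem_bot ℂ).mp hmem
      have hUtop : U = ⊤ := RAux.top_of_invariant hUinv hUne
      apply LinearMap.ext
      intro v
      have hv : v ∈ U := hUtop ▸ Submodule.mem_top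
      obtain ⟨w, rfl⟩ := hv
      have h1 : V.ρ n (f.hom w) = f.hom ((PAux.permRep M).ρ n w) :=
        (RAux.hom_apply_comm f n w).symm
      exact h1.trans (by rw [htriv]; rfl)
    have hbot : N ≤ ⊥ := by
      intro n hn
      have := RAux.eq_one_of_triv_on_simples (n := n) (fun V hV => hkey V hV n hn)
      simpa using this
    exact hNne (le_bot_iff.mp hbot)
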